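/- Let k be an algebraically closed field, let A, B be n×n matrices over k and C, D be m×m matrices over k, and suppose α_1, …, α_n, β_1, …, β_n ∈ k are such that det(λ A + μ B) = ∏_{i=1}^n (α_i λ + β_i μ) as polynomials in the variables λ, μ. Then, as polynomials in λ, μ: det(λ (A ⊗ C) + μ (B ⊗ D)) = ∏_{i=1}^n det(α_i λ C + β_i μ D), where ⊗ denotes the Kronecker product of matrices. -/

import Mathlib

namespace Stmt19Aux

open Matrix MvPolynomial Kronecker

variable {k : Type*} [Field k]

/-- The matrix pencil `λ A + μ B` over `k[λ,μ]`. -/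
noncomputable def pencil {ι : Type*} [Fintype ι] [DecidableEq ι]
    (A B : Matrix ι ι k) : Matrix ι ι (MvPolynomial (Fin 2) k) :=
  (X 0 : MvPolynomial (Fin 2) k) • A.map (C : k →+* MvPolynomial (Fin 2) k) +
    (X 1 : MvPolynomial (Fin 2) k) • B.map (C : k →+* MvPolynomial (Fin 2) k)

lemma pencil_apply {ι : Type*} [Fintype ι] [DecidableEq ι] (A B : Matrix ι ι k) (i j : ι) :
    pencil A B i j = X 0 * C (A i j) + X 1 * C (B i j) := by
  simp [pencil, Matrix.add_apply, Matrix.smul_apply, Matrix.map_apply, smul_eq_mul]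

lemma pencil_mul {ι : Type*} [Fintype ι] [DecidableEq ι] (P Q A B : Matrix ι ι k) :
    pencil (P * A * Q) (P * B * Q)
      = P.map (C : k →+* MvPolynomial (Fin 2) k) * pencil A B
          * Q.map (C : k →+* MvPolynomial (Fin 2) k) := by
  simp only [pencil, Matrix.map_mul, Matrix.mul_add, Matrix.add_mul,
    Matrix.mul_smul, Matrix.smul_mul]

lemma det_pencil_mul {ι : Type*} [Fintype ι] [DecidableEq ι] (P Q A B : Matrix ι ι k) :
    (pencil (P * A * Q) (P * B * Q)).det
      = C (P.det * Q.det) * (pencil A B).det := by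
  rw [pencil_mul, det_mul, det_mul, _root_.map_mul, RingHom.map_det, RingHom.map_det,
    RingHom.mapMatrix_apply, RingHom.mapMatrix_apply]
  ring

lemma form_eq_zero_iff (a b : k) :
    (C a * X 0 + C b * X 1 : MvPolynomial (Fin 2) k) = 0 ↔ a = 0 ∧ b = 0 := by
  constructor
  · intro h
    constructor
    · simpa using congrArg (eval (fun i : Fin 2 => if i = 0 then (1:k) else 0)) h
    · simpa using congrArg (eval (fun i : Fin 2 => if i = 0 then (0:k) else 1)) h
  · rintro ⟨rfl, rfl⟩; simp


lemma exists_col {n : ℕ} (v : Fin (n+1) → k) (hv : v ≠ 0) :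
    ∃ Q : Matrix (Fin (n+1)) (Fin (n+1)) k, IsUnit Q.det ∧ (∀ i, Q i 0 = v i) := by
  obtain ⟨j, hj⟩ : ∃ j, v j ≠ 0 := by
    by_contra h; push_neg at h; exact hv (funext h)
  have hdet : ((1 : Matrix (Fin (n+1)) (Fin (n+1)) k).updateCol j v).det = v j := by
    rw [← Matrix.cramer_apply, Matrix.cramer_one]; rfl
  refine ⟨((1 : Matrix (Fin (n+1)) (Fin (n+1)) k).updateCol j v).submatrix
      id ⇑(Equiv.swap 0 j), ?_, fun i => by
        simp [Matrix.submatrix_apply, Equiv.swap_apply_left]⟩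
  rw [isUnit_iff_ne_zero, Matrix.det_permute', hdet]
  refine mul_ne_zero ?_ hj
  rcases Int.units_eq_one_or (Equiv.Perm.sign (Equiv.swap 0 j)) with h | h <;> simp [h]

lemma exists_row {n : ℕ} (w : Fin (n+1) → k) (hw : w ≠ 0) :
    ∃ P : Matrix (Fin (n+1)) (Fin (n+1)) k, IsUnit P.det ∧ P *ᵥ w = Pi.single 0 1 := by
  obtain ⟨Q, hQ, hcol⟩ := exists_col w hw
  refine ⟨Q⁻¹, Matrix.isUnit_nonsing_inv_det Q hQ, ?_⟩
  have hw' : w = Q *ᵥ Pi.single (0 : Fin (n+1)) (1 : k) := by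
    funext i; rw [Matrix.mulVec_single]; simp [hcol i]
  rw [hw', Matrix.mulVec_mulVec, Matrix.nonsing_inv_mul Q hQ, Matrix.one_mulVec]

lemma pencil_mulVec_C {ι : Type*} [Fintype ι] [DecidableEq ι] (A B : Matrix ι ι k)
    (v : ι → k) :
    pencil A B *ᵥ (fun i => (C (v i) : MvPolynomial (Fin 2) k))
      = fun i => X 0 * C ((A *ᵥ v) i) + X 1 * C ((B *ᵥ v) i) := by
  funext i
  have hA : ((A.map (C : k →+* MvPolynomial (Fin 2) k)) *ᵥ
      (fun i => (C (v i) : MvPolynomial (Fin 2) k))) i = C ((A *ᵥ v) i) := by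
    rw [show (fun i => (C (v i) : MvPolynomial (Fin 2) k)) = ⇑(C : k →+* _) ∘ v from rfl,
      ← RingHom.map_mulVec]
  have hB : ((B.map (C : k →+* MvPolynomial (Fin 2) k)) *ᵥ
      (fun i => (C (v i) : MvPolynomial (Fin 2) k))) i = C ((B *ᵥ v) i) := by
    rw [show (fun i => (C (v i) : MvPolynomial (Fin 2) k)) = ⇑(C : k →+* _) ∘ v from rfl,
      ← RingHom.map_mulVec]
  rw [pencil, Matrix.add_mulVec, Matrix.smul_mulVec, Matrix.smul_mulVec]
  simp only [Pi.add_apply, Pi.smul_apply, hA, hB, smul_eq_mul]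

/-- If a nonzero constant vector is killed by both `A` and `B`, the pencil determinant is `0`. -/
lemma det_pencil_eq_zero_of_kernel {ι : Type*} [Fintype ι] [DecidableEq ι]
    (A B : Matrix ι ι k) (v : ι → k) (hv : v ≠ 0) (hA : A *ᵥ v = 0) (hB : B *ᵥ v = 0) :
    (pencil A B).det = 0 := by
  obtain ⟨j, hj⟩ : ∃ j, v j ≠ 0 := by
    by_contra h; push_neg at h; exact hv (funext h)
  set M := pencil A B
  have hker : M *ᵥ (fun i => (C (v i) : MvPolynomial (Fin 2) k)) = 0 := by
    rw [pencil_mulVec_C, hA, hB]; funext i; simp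
  have h2 : M.det • (fun i => (C (v i) : MvPolynomial (Fin 2) k)) = 0 := by
    calc M.det • (fun i => (C (v i) : MvPolynomial (Fin 2) k))
        = (M.det • (1 : Matrix ι ι (MvPolynomial (Fin 2) k))) *ᵥ
            (fun i => (C (v i) : MvPolynomial (Fin 2) k)) := by
          rw [Matrix.smul_mulVec, Matrix.one_mulVec]
      _ = M.adjugate *ᵥ (M *ᵥ (fun i => (C (v i) : MvPolynomial (Fin 2) k))) := by
          rw [Matrix.mulVec_mulVec, Matrix.adjugate_mul]
      _ = 0 := by rw [hker]; simp
  have h3 : M.det * C (v j) = 0 := congrFun h2 j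
  have : (C (v j) : MvPolynomial (Fin 2) k) ≠ 0 := by
    simpa using hj
  exact (mul_eq_zero.mp h3).resolve_right this

lemma eval_det_pencil {ι : Type*} [Fintype ι] [DecidableEq ι] (A B : Matrix ι ι k)
    (p : Fin 2 → k) :
    eval p (pencil A B).det = (p 0 • A + p 1 • B).det := by
  rw [RingHom.map_det]
  congr 1
  ext i j
  simp [pencil_apply, Matrix.add_apply, Matrix.smul_apply, RingHom.mapMatrix_apply,
    Matrix.map_apply, smul_eq_mul]


lemma pencil_submatrix {ι κ : Type*} [Fintype ι] [DecidableEq ι] [Fintype κ] [DecidableEq κ]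
    (A B : Matrix ι ι k) (f g : κ → ι) :
    (pencil A B).submatrix f g = pencil (A.submatrix f g) (B.submatrix f g) := by
  ext i j
  simp [pencil_apply, Matrix.submatrix_apply]

lemma det_pencil_block {n : ℕ} (A' B' : Matrix (Fin (n+1)) (Fin (n+1)) k) (a₀ b₀ : k)
    (hA0 : A' 0 0 = a₀) (hA : ∀ i : Fin n, A' i.succ 0 = 0)
    (hB0 : B' 0 0 = b₀) (hB : ∀ i : Fin n, B' i.succ 0 = 0) :
    (pencil A' B').det = (C a₀ * X 0 + C b₀ * X 1) *
      (pencil (A'.submatrix Fin.succ Fin.succ) (B'.submatrix Fin.succ Fin.succ)).det := by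
  rw [Matrix.det_succ_column_zero, Finset.sum_eq_single 0]
  · simp only [Fin.val_zero, pow_zero, one_mul, pencil_apply, hA0, hB0,
      Fin.succAbove_zero, pencil_submatrix]
    ring
  · intro i _ hi
    obtain ⟨j, rfl⟩ := Fin.eq_succ_of_ne_zero hi
    simp [pencil_apply, hA j, hB j]
  · intro h
    exact absurd (Finset.mem_univ _) h

/-- The reindexing used to exhibit the first block column of a Kronecker pencil. -/
def sumEquiv (n m : ℕ) : (Fin m ⊕ (Fin n × Fin m)) ≃ (Fin (n+1) × Fin m) where
  toFun := Sum.elim (fun s => (0, s)) (fun p => (p.1.succ, p.2))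
  invFun p := Fin.cases (Sum.inl p.2) (fun i => Sum.inr (i, p.2)) p.1
  left_inv := by rintro (s | ⟨i, s⟩) <;> simp
  right_inv := by
    rintro ⟨i, s⟩
    refine Fin.cases ?_ (fun j => ?_) i <;> simp

lemma det_kpencil_block {n m : ℕ} (A' B' : Matrix (Fin (n+1)) (Fin (n+1)) k)
    (Cm Dm : Matrix (Fin m) (Fin m) k) (a₀ b₀ : k)
    (hA0 : A' 0 0 = a₀) (hA : ∀ i : Fin n, A' i.succ 0 = 0)
    (hB0 : B' 0 0 = b₀) (hB : ∀ i : Fin n, B' i.succ 0 = 0) :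
    (pencil (A' ⊗ₖ Cm) (B' ⊗ₖ Dm)).det
      = ((C a₀ * X 0 : MvPolynomial (Fin 2) k) • Cm.map (C : k →+* MvPolynomial (Fin 2) k)
          + (C b₀ * X 1 : MvPolynomial (Fin 2) k) •
              Dm.map (C : k →+* MvPolynomial (Fin 2) k)).det *
        (pencil ((A'.submatrix Fin.succ Fin.succ) ⊗ₖ Cm)
                ((B'.submatrix Fin.succ Fin.succ) ⊗ₖ Dm)).det := by
  have hdet := Matrix.det_submatrix_equiv_self (sumEquiv n m) (pencil (A' ⊗ₖ Cm) (B' ⊗ₖ Dm))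
  set N := (pencil (A' ⊗ₖ Cm) (B' ⊗ₖ Dm)).submatrix (sumEquiv n m) (sumEquiv n m) with hN
  rw [← hdet, ← Matrix.fromBlocks_toBlocks N]
  have h21 : N.toBlocks₂₁ = 0 := by
    ext ⟨i, s⟩ t
    simp [Matrix.toBlocks₂₁, hN, sumEquiv, pencil_apply, Matrix.kroneckerMap_apply,
      hA i, hB i]
  rw [h21, Matrix.det_fromBlocks_zero₂₁]
  have h11 : N.toBlocks₁₁
      = (C a₀ * X 0 : MvPolynomial (Fin 2) k) • Cm.map (C : k →+* MvPolynomial (Fin 2) k)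
        + (C b₀ * X 1 : MvPolynomial (Fin 2) k) •
            Dm.map (C : k →+* MvPolynomial (Fin 2) k) := by
    refine Matrix.ext fun s t => ?_
    simp only [Matrix.toBlocks₁₁, hN, Matrix.submatrix_apply, Matrix.of_apply,
      sumEquiv, Equiv.coe_fn_mk, Sum.elim_inl, pencil_apply, Matrix.kroneckerMap_apply,
      hA0, hB0, _root_.map_mul, Matrix.add_apply, Matrix.smul_apply, Matrix.map_apply,
      smul_eq_mul]
    ring
  have h22 : N.toBlocks₂₂
      = pencil ((A'.submatrix Fin.succ Fin.succ) ⊗ₖ Cm)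
          ((B'.submatrix Fin.succ Fin.succ) ⊗ₖ Dm) := by
    refine Matrix.ext fun p q => ?_
    obtain ⟨i, s⟩ := p; obtain ⟨j, t⟩ := q
    simp [Matrix.toBlocks₂₂, hN, sumEquiv, pencil_apply, Matrix.kroneckerMap_apply,
      Matrix.submatrix_apply]
  rw [h11, h22]


lemma C_ne_zero' {a : k} (ha : a ≠ 0) : (C a : MvPolynomial (Fin 2) k) ≠ 0 :=
  fun h0 => ha (by simpa using (MvPolynomial.C_injective (Fin 2) k) (h0.trans (map_zero _).symm))

lemma mul_col0 {n : ℕ} (M N : Matrix (Fin (n+1)) (Fin (n+1)) k) (i : Fin (n+1)) :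
    (M * N) i 0 = (M *ᵥ (fun l => N l 0)) i := by
  simp [Matrix.mul_apply, Matrix.mulVec, dotProduct]

/-- The key reduction step: if the transformed pencil has first column supported on the
`(0,0)` entry with values `a₀, b₀`, both the scalar pencil determinant and the Kronecker
pencil determinant factor accordingly. -/
lemma key {n m : ℕ} (Cm Dm : Matrix (Fin m) (Fin m) k)
    (A B P Q : Matrix (Fin (n+1)) (Fin (n+1)) k) (a₀ b₀ : k)
    (hcolA : ∀ i, (P * A * Q) i 0 = a₀ * ((Pi.single (0 : Fin (n+1)) (1 : k) : Fin (n+1) → k) i))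
    (hcolB : ∀ i, (P * B * Q) i 0 = b₀ * ((Pi.single (0 : Fin (n+1)) (1 : k) : Fin (n+1) → k) i)) :
    (C (P.det * Q.det) : MvPolynomial (Fin 2) k) * (pencil A B).det
        = (C a₀ * X 0 + C b₀ * X 1) *
          (pencil ((P * A * Q).submatrix Fin.succ Fin.succ)
            ((P * B * Q).submatrix Fin.succ Fin.succ)).det
    ∧ (C ((P.det * Q.det) ^ m) : MvPolynomial (Fin 2) k) * (pencil (A ⊗ₖ Cm) (B ⊗ₖ Dm)).det
        = ((C a₀ * X 0 : MvPolynomial (Fin 2) k) • Cm.map (C : k →+* MvPolynomial (Fin 2) k)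
            + (C b₀ * X 1 : MvPolynomial (Fin 2) k) •
                Dm.map (C : k →+* MvPolynomial (Fin 2) k)).det *
          (pencil (((P * A * Q).submatrix Fin.succ Fin.succ) ⊗ₖ Cm)
            (((P * B * Q).submatrix Fin.succ Fin.succ) ⊗ₖ Dm)).det := by
  have hA0 : (P * A * Q) 0 0 = a₀ := by simpa using hcolA 0
  have hB0 : (P * B * Q) 0 0 = b₀ := by simpa using hcolB 0
  have hAs : ∀ i : Fin n, (P * A * Q) i.succ 0 = 0 := by
    intro i
    simpa [Pi.single_eq_of_ne (Fin.succ_ne_zero i)] using hcolA i.succ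
  have hBs : ∀ i : Fin n, (P * B * Q) i.succ 0 = 0 := by
    intro i
    simpa [Pi.single_eq_of_ne (Fin.succ_ne_zero i)] using hcolB i.succ
  constructor
  · rw [← det_pencil_mul P Q A B,
      det_pencil_block (P * A * Q) (P * B * Q) a₀ b₀ hA0 hAs hB0 hBs]
  · have e1 : (P * A * Q) ⊗ₖ Cm
        = (P ⊗ₖ (1 : Matrix (Fin m) (Fin m) k)) * (A ⊗ₖ Cm)
            * (Q ⊗ₖ (1 : Matrix (Fin m) (Fin m) k)) := by
      rw [← Matrix.mul_kronecker_mul, ← Matrix.mul_kronecker_mul, Matrix.mul_one,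
        Matrix.one_mul]
    have e2 : (P * B * Q) ⊗ₖ Dm
        = (P ⊗ₖ (1 : Matrix (Fin m) (Fin m) k)) * (B ⊗ₖ Dm)
            * (Q ⊗ₖ (1 : Matrix (Fin m) (Fin m) k)) := by
      rw [← Matrix.mul_kronecker_mul, ← Matrix.mul_kronecker_mul, Matrix.mul_one,
        Matrix.one_mul]
    have hdet := det_pencil_mul (P ⊗ₖ (1 : Matrix (Fin m) (Fin m) k))
      (Q ⊗ₖ (1 : Matrix (Fin m) (Fin m) k)) (A ⊗ₖ Cm) (B ⊗ₖ Dm)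
    rw [← e1, ← e2] at hdet
    have hPd : (P ⊗ₖ (1 : Matrix (Fin m) (Fin m) k)).det = P.det ^ m := by
      rw [Matrix.det_kronecker]; simp
    have hQd : (Q ⊗ₖ (1 : Matrix (Fin m) (Fin m) k)).det = Q.det ^ m := by
      rw [Matrix.det_kronecker]; simp
    rw [hPd, hQd] at hdet
    rw [mul_pow, ← hdet,
      det_kpencil_block (P * A * Q) (P * B * Q) Cm Dm a₀ b₀ hA0 hAs hB0 hBs]

/-- Singular case: if the pencil determinant vanishes identically, so does the Kronecker
pencil determinant (for `m ≥ 1`). -/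
lemma lemS {m : ℕ} (hm : 0 < m) (Cm Dm : Matrix (Fin m) (Fin m) k) :
    ∀ n (A B : Matrix (Fin n) (Fin n) k), (pencil A B).det = 0 →
      (pencil (A ⊗ₖ Cm) (B ⊗ₖ Dm)).det = 0 := by
  intro n
  induction n with
  | zero =>
    intro A B h
    rw [Matrix.det_isEmpty] at h
    exact absurd h one_ne_zero
  | succ n ih =>
    intro A B h
    have hdetA : A.det = 0 := by
      have h1 := eval_det_pencil A B (fun i => if i = 0 then 1 else 0)
      rw [h] at h1
      simpa using h1.symm
    obtain ⟨v, hv, hAv⟩ := Matrix.exists_mulVec_eq_zero_iff.mpr hdetA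
    obtain ⟨j0, hj0⟩ : ∃ j, v j ≠ 0 := by
      by_contra hc; push_neg at hc; exact hv (funext hc)
    by_cases hw : B *ᵥ v = 0
    · -- both kill `v`: exhibit a kernel vector of the Kronecker pencil directly
      set s0 : Fin m := ⟨0, hm⟩
      set v' : (Fin (n+1) × Fin m) → k := fun p => if p.2 = s0 then v p.1 else 0 with hv'
      have hkernel : ∀ (M : Matrix (Fin (n+1)) (Fin (n+1)) k)
          (E : Matrix (Fin m) (Fin m) k), M *ᵥ v = 0 → (M ⊗ₖ E) *ᵥ v' = 0 := by
        intro M E hM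
        funext p
        obtain ⟨i, s⟩ := p
        have h0 : ∑ j, M i j * v j = 0 := by
          have := congrFun hM i
          simpa [Matrix.mulVec, dotProduct] using this
        simp only [Matrix.mulVec, dotProduct, Fintype.sum_prod_type,
          Matrix.kroneckerMap_apply, Pi.zero_apply, hv']
        have hrow : ∀ j, (∑ t, M i j * E s t * (if t = s0 then v j else 0))
            = M i j * v j * E s s0 := by
          intro j
          rw [Finset.sum_eq_single s0]
          · rw [if_pos rfl]; ring
          · intro t _ ht; rw [if_neg ht, mul_zero]
          · intro hns; exact absurd (Finset.mem_univ _) hns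
        calc ∑ j, ∑ t, M i j * E s t * (if t = s0 then v j else 0)
            = ∑ j, M i j * v j * E s s0 := Finset.sum_congr rfl fun j _ => hrow j
          _ = (∑ j, M i j * v j) * E s s0 := by rw [Finset.sum_mul]
          _ = 0 := by rw [h0, zero_mul]
      have hv'ne : v' ≠ 0 := by
        intro h0
        apply hj0
        have := congrFun h0 (j0, s0)
        simpa [hv'] using this
      exact det_pencil_eq_zero_of_kernel _ _ v' hv'ne (hkernel A Cm hAv) (hkernel B Dm hw)
    · obtain ⟨P, hP, hPw⟩ := exists_row (B *ᵥ v) hw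
      obtain ⟨Q, hQ, hQcol⟩ := exists_col v hv
      have hQ0 : (fun l => Q l 0) = v := funext hQcol
      have hcolA : ∀ i, (P * A * Q) i 0 = 0 * ((Pi.single (0 : Fin (n+1)) (1 : k) : Fin (n+1) → k) i) := by
        intro i
        rw [mul_col0, hQ0, ← Matrix.mulVec_mulVec, hAv]
        simp
      have hcolB : ∀ i, (P * B * Q) i 0 = 1 * ((Pi.single (0 : Fin (n+1)) (1 : k) : Fin (n+1) → k) i) := by
        intro i
        rw [mul_col0, hQ0, ← Matrix.mulVec_mulVec, hPw]
        simp
      obtain ⟨h1, h2⟩ := key Cm Dm A B P Q 0 1 hcolA hcolB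
      have hdet1 : (pencil ((P * A * Q).submatrix Fin.succ Fin.succ)
          ((P * B * Q).submatrix Fin.succ Fin.succ)).det = 0 := by
        rw [h, mul_zero] at h1
        have h1' := h1.symm
        simp only [map_zero, _root_.map_one, zero_mul, one_mul, zero_add] at h1'
        rcases mul_eq_zero.mp h1' with hx | hd
        · exact absurd hx (MvPolynomial.X_ne_zero 1)
        · exact hd
      have := ih _ _ hdet1
      rw [this, mul_zero] at h2
      have hu : ((P.det * Q.det) ^ m) ≠ 0 :=
        pow_ne_zero _ (mul_ne_zero hP.ne_zero hQ.ne_zero)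
      rcases mul_eq_zero.mp h2 with hc | hd
      · exact absurd hc (C_ne_zero' hu)
      · exact hd


/-- Main lemma: extended Cayley theorem for `m ≥ 1`, by induction on `n`. -/
lemma lemR {m : ℕ} (hm : 0 < m) (Cm Dm : Matrix (Fin m) (Fin m) k) :
    ∀ n (A B : Matrix (Fin n) (Fin n) k) (α β : Fin n → k),
      (pencil A B).det = ∏ i, (C (α i) * X 0 + C (β i) * X 1) →
      (pencil (A ⊗ₖ Cm) (B ⊗ₖ Dm)).det
        = ∏ i, ((C (α i) * X 0 : MvPolynomial (Fin 2) k) •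
              Cm.map (C : k →+* MvPolynomial (Fin 2) k) +
            (C (β i) * X 1 : MvPolynomial (Fin 2) k) •
              Dm.map (C : k →+* MvPolynomial (Fin 2) k)).det := by
  haveI : Nonempty (Fin m) := ⟨⟨0, hm⟩⟩
  intro n
  induction n with
  | zero =>
    intro A B α β h
    simp [Matrix.det_isEmpty]
  | succ n ih =>
    intro A B α β h
    by_cases hzero : ∃ j, α j = 0 ∧ β j = 0
    · -- singular case
      obtain ⟨j, hja, hjb⟩ := hzero
      have hblock0 : ((C (α j) * X 0 : MvPolynomial (Fin 2) k) •
            Cm.map (C : k →+* MvPolynomial (Fin 2) k) +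
          (C (β j) * X 1 : MvPolynomial (Fin 2) k) •
            Dm.map (C : k →+* MvPolynomial (Fin 2) k)) = 0 := by
        rw [hja, hjb]; simp
      have hP0 : (pencil A B).det = 0 := by
        rw [h]
        refine Finset.prod_eq_zero (Finset.mem_univ j) ?_
        rw [hja, hjb]; simp
      rw [lemS hm Cm Dm _ A B hP0]
      symm
      refine Finset.prod_eq_zero (Finset.mem_univ j) ?_
      rw [hblock0, Matrix.det_zero]
    · -- regular case
      push_neg at hzero
      have hform0 : (C (α 0) * X 0 + C (β 0) * X 1 : MvPolynomial (Fin 2) k) ≠ 0 := by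
        rw [Ne, form_eq_zero_iff]
        rintro ⟨h1, h2⟩
        exact hzero 0 h1 h2
      -- find an eigendirection for the pair `(α 0, β 0)`
      have hroot : ((β 0) • A + (-(α 0)) • B).det = 0 := by
        have h1 := eval_det_pencil A B ![β 0, -(α 0)]
        simp only [Matrix.cons_val_zero, Matrix.cons_val_one, Matrix.head_cons] at h1
        rw [h, map_prod] at h1
        rw [← h1]
        refine Finset.prod_eq_zero (Finset.mem_univ 0) ?_
        simp only [map_add, _root_.map_mul, MvPolynomial.eval_C, MvPolynomial.eval_X,
          Matrix.cons_val_zero, Matrix.cons_val_one, Matrix.head_cons]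
        ring
      obtain ⟨v, hv, hkv⟩ := Matrix.exists_mulVec_eq_zero_iff.mpr hroot
      have hrel : β 0 • (A *ᵥ v) + (-(α 0)) • (B *ᵥ v) = 0 := by
        rw [← Matrix.smul_mulVec, ← Matrix.smul_mulVec, ← Matrix.add_mulVec, hkv]
      obtain ⟨w, hAw, hBw⟩ : ∃ w, A *ᵥ v = α 0 • w ∧ B *ᵥ v = β 0 • w := by
        rcases eq_or_ne (α 0) 0 with ha0 | ha0
        · have hb0 : β 0 ≠ 0 := fun hb => hzero 0 ha0 hb
          refine ⟨(β 0)⁻¹ • (B *ᵥ v), ?_, ?_⟩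
          · have : β 0 • (A *ᵥ v) = 0 := by
              have := hrel
              rw [ha0] at this
              simpa using this
            rw [ha0, zero_smul]
            exact smul_eq_zero.mp this |>.resolve_left hb0
          · rw [smul_smul, mul_inv_cancel₀ hb0, one_smul]
        · refine ⟨(α 0)⁻¹ • (A *ᵥ v), ?_, ?_⟩
          · rw [smul_smul, mul_inv_cancel₀ ha0, one_smul]
          · have hba : β 0 • (A *ᵥ v) = α 0 • (B *ᵥ v) := by
              have := hrel
              rw [add_eq_zero_iff_eq_neg] at this
              rw [this]; funext i; simp
            rw [smul_smul, mul_comm (β 0), ← smul_smul, hba, smul_smul,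
              inv_mul_cancel₀ ha0, one_smul]
      have hwne : w ≠ 0 := by
        intro h0
        rw [h0, smul_zero] at hAw hBw
        have hzero' : (pencil A B).det = 0 :=
          det_pencil_eq_zero_of_kernel A B v hv hAw hBw
        rw [h] at hzero'
        obtain ⟨j, _, hj⟩ := Finset.prod_eq_zero_iff.mp hzero'
        obtain ⟨h1, h2⟩ := (form_eq_zero_iff _ _).mp hj
        exact hzero j h1 h2
      obtain ⟨P, hP, hPw⟩ := exists_row w hwne
      obtain ⟨Q, hQ, hQcol⟩ := exists_col v hv
      have hQ0 : (fun l => Q l 0) = v := funext hQcol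
      have hcolA : ∀ i, (P * A * Q) i 0
          = α 0 * ((Pi.single (0 : Fin (n+1)) (1 : k) : Fin (n+1) → k) i) := by
        intro i
        rw [mul_col0, hQ0, ← Matrix.mulVec_mulVec, hAw, Matrix.mulVec_smul, hPw]
        simp
      have hcolB : ∀ i, (P * B * Q) i 0
          = β 0 * ((Pi.single (0 : Fin (n+1)) (1 : k) : Fin (n+1) → k) i) := by
        intro i
        rw [mul_col0, hQ0, ← Matrix.mulVec_mulVec, hBw, Matrix.mulVec_smul, hPw]
        simp
      obtain ⟨h1, h2⟩ := key Cm Dm A B P Q (α 0) (β 0) hcolA hcolB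
      set u := P.det * Q.det with hu_def
      have hu : u ≠ 0 := mul_ne_zero hP.ne_zero hQ.ne_zero
      set A₁ := (P * A * Q).submatrix Fin.succ Fin.succ with hA₁
      set B₁ := (P * B * Q).submatrix Fin.succ Fin.succ with hB₁
      rw [h, Fin.prod_univ_succ] at h1
      have hdet1 : (pencil A₁ B₁).det
          = C u * ∏ i : Fin n, (C (α i.succ) * X 0 + C (β i.succ) * X 1) := by
        apply mul_left_cancel₀ hform0
        rw [← h1]; ring
      rcases Nat.eq_zero_or_pos n with hn | hn
      · -- n = 0 : the small pencil is empty, so `C u = 1`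
        subst hn
        have hu1 : (C u : MvPolynomial (Fin 2) k) = 1 := by
          rw [Matrix.det_isEmpty] at hdet1
          simpa using hdet1.symm
        have hk1 : (pencil (A₁ ⊗ₖ Cm) (B₁ ⊗ₖ Dm)).det = 1 := Matrix.det_isEmpty
        rw [hk1, mul_one] at h2
        have hCum : (C (u ^ m) : MvPolynomial (Fin 2) k) = 1 := by
          rw [map_pow, hu1, one_pow]
        rw [hCum, one_mul] at h2
        rw [h2, Fin.prod_univ_succ]
        simp
      · haveI : NeZero n := ⟨hn.ne'⟩
        set α' : Fin n → k := fun i => (if i = 0 then u else 1) * α i.succ with hα'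
        set β' : Fin n → k := fun i => (if i = 0 then u else 1) * β i.succ with hβ'
        have hsc : ∏ i : Fin n, (C (if i = (0 : Fin n) then u else 1) :
            MvPolynomial (Fin 2) k) = C u := by
          rw [← map_prod]
          congr 1
          rw [Finset.prod_ite_eq' Finset.univ (0 : Fin n) (fun _ => u), if_pos (Finset.mem_univ _)]
        have hfact : ∀ i : Fin n, (C (α' i) * X 0 + C (β' i) * X 1 : MvPolynomial (Fin 2) k)
            = C (if i = (0 : Fin n) then u else 1) *
                (C (α i.succ) * X 0 + C (β i.succ) * X 1) := by
          intro i
          rw [hα', hβ']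
          simp only [_root_.map_mul]
          ring
        have hyp1 : (pencil A₁ B₁).det
            = ∏ i : Fin n, (C (α' i) * X 0 + C (β' i) * X 1) := by
          rw [hdet1]
          rw [Finset.prod_congr rfl fun i _ => hfact i, Finset.prod_mul_distrib, hsc]
        have hIH := ih A₁ B₁ α' β' hyp1
        have hblockfact : ∀ i : Fin n,
            ((C (α' i) * X 0 : MvPolynomial (Fin 2) k) •
                Cm.map (C : k →+* MvPolynomial (Fin 2) k) +
              (C (β' i) * X 1 : MvPolynomial (Fin 2) k) •
                Dm.map (C : k →+* MvPolynomial (Fin 2) k)).det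
            = (C (if i = (0 : Fin n) then u else 1) : MvPolynomial (Fin 2) k) ^ m *
              ((C (α i.succ) * X 0 : MvPolynomial (Fin 2) k) •
                  Cm.map (C : k →+* MvPolynomial (Fin 2) k) +
                (C (β i.succ) * X 1 : MvPolynomial (Fin 2) k) •
                  Dm.map (C : k →+* MvPolynomial (Fin 2) k)).det := by
          intro i
          have hmat : ((C (α' i) * X 0 : MvPolynomial (Fin 2) k) •
                Cm.map (C : k →+* MvPolynomial (Fin 2) k) +
              (C (β' i) * X 1 : MvPolynomial (Fin 2) k) •
                Dm.map (C : k →+* MvPolynomial (Fin 2) k))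
              = (C (if i = (0 : Fin n) then u else 1) : MvPolynomial (Fin 2) k) •
                ((C (α i.succ) * X 0 : MvPolynomial (Fin 2) k) •
                    Cm.map (C : k →+* MvPolynomial (Fin 2) k) +
                  (C (β i.succ) * X 1 : MvPolynomial (Fin 2) k) •
                    Dm.map (C : k →+* MvPolynomial (Fin 2) k)) := by
            rw [smul_add, smul_smul, smul_smul, hα', hβ']
            simp only [_root_.map_mul]
            ring_nf
          rw [hmat, Matrix.det_smul]
          simp
        rw [Finset.prod_congr rfl fun i _ => hblockfact i, Finset.prod_mul_distrib,
          Finset.prod_pow, hsc, ← map_pow] at hIH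
        rw [hIH] at h2
        have hCum : (C (u ^ m) : MvPolynomial (Fin 2) k) ≠ 0 := C_ne_zero' (pow_ne_zero _ hu)
        apply mul_left_cancel₀ hCum
        rw [h2, Fin.prod_univ_succ]
        ring

end Stmt19Aux

open Matrix MvPolynomial Kronecker in
/-- (Extended Cayley theorem) Let `k` be an algebraically closed field,
`A, B` be `n×n` matrices and `C, D` be `m×m` matrices over `k`, and suppose
`det(λ A + μ B) = ∏ᵢ (αᵢ λ + βᵢ μ)` as polynomials in `λ = X 0`, `μ = X 1`. Then
`det(λ (A ⊗ C) + μ (B ⊗ D)) = ∏ᵢ det(αᵢ λ C + βᵢ μ D)`, where `⊗` is the Kronecker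
product. -/
theorem stmt19 {k : Type*} [Field k] [IsAlgClosed k] {n m : ℕ}
    (A B : Matrix (Fin n) (Fin n) k) (C D : Matrix (Fin m) (Fin m) k)
    (α β : Fin n → k)
    (h : Matrix.det ((X 0 : MvPolynomial (Fin 2) k) •
          A.map (MvPolynomial.C : k →+* MvPolynomial (Fin 2) k) +
        (X 1 : MvPolynomial (Fin 2) k) •
          B.map (MvPolynomial.C : k →+* MvPolynomial (Fin 2) k)) =
      ∏ i, (MvPolynomial.C (α i) * X 0 + MvPolynomial.C (β i) * X 1)) :
    Matrix.det ((X 0 : MvPolynomial (Fin 2) k) •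
          (A ⊗ₖ C).map (MvPolynomial.C : k →+* MvPolynomial (Fin 2) k) +
        (X 1 : MvPolynomial (Fin 2) k) •
          (B ⊗ₖ D).map (MvPolynomial.C : k →+* MvPolynomial (Fin 2) k)) =
      ∏ i, Matrix.det (((MvPolynomial.C (α i) * X 0 : MvPolynomial (Fin 2) k)) •
            C.map (MvPolynomial.C : k →+* MvPolynomial (Fin 2) k) +
          ((MvPolynomial.C (β i) * X 1 : MvPolynomial (Fin 2) k)) •
            D.map (MvPolynomial.C : k →+* MvPolynomial (Fin 2) k)) := by
  rcases Nat.eq_zero_or_pos m with hm | hm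
  · subst hm
    haveI : IsEmpty (Fin n × Fin 0) := ⟨fun p => p.2.elim0⟩
    rw [Matrix.det_isEmpty]
    exact (Finset.prod_eq_one fun i _ => Matrix.det_isEmpty).symm
  · exact Stmt19Aux.lemR hm C D n A B α β h
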